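/- Let h : [0,1] → [0,∞) be integrable with ∫_0^1 h(u) du = 1. Then for all x, y ∈ [0,1]: ∫*_{u=x}^{y} h(u) · ( ∫*_{z=x}^{u} h(z) dz + ∫*_{z=y}^{u} h(z) dz ) du = ∫*_{u=x}^{y} h(u) du. -/

import Mathlib

open MeasureTheory

/-- Circular integral: `∫*_{u=a}^{b} h(u) du` on the circle `[0,1)`.
It equals `∫_a^b h` if `a ≤ b` and `∫_a^1 h + ∫_0^b h` if `a > b`. -/
noncomputable def cint (a b : ℝ) (h : ℝ → ℝ) : ℝ :=
  if a ≤ b then ∫ u in a..b, h u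
  else (∫ u in a..(1 : ℝ), h u) + ∫ u in (0 : ℝ)..b, h u

open intervalIntegral
lemma hmulprim {h : ℝ → ℝ} (hint : IntervalIntegrable h volume 0 1) {a b c : ℝ}
    (ha : a ∈ Set.Icc (0:ℝ) 1) (hb : b ∈ Set.Icc (0:ℝ) 1) (hc : c ∈ Set.Icc (0:ℝ) 1) :
    IntervalIntegrable (fun u => h u * ∫ z in c..u, h z) volume a b := by
  have h01 : Set.uIcc (0:ℝ) 1 = Set.Icc 0 1 := Set.uIcc_of_le zero_le_one
  have hsub : Set.uIcc a b ⊆ Set.uIcc (0:ℝ) 1 := by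
    rw [h01]; exact Set.uIcc_subset_Icc ha hb
  exact (hint.mono_set hsub).mul_continuousOn
    (((continuousOn_primitive_interval' hint (by rw [h01]; exact hc))).mono hsub)

lemma key_half (h : ℝ → ℝ) (hmeas : Measurable h) {a b : ℝ} (hab : a ≤ b)
    (hint : IntervalIntegrable h volume a b) :
    (∫ u in a..b, h u * ∫ z in a..u, h z) = (∫ z in a..b, h z) ^ 2 / 2 := by
  set S := ∫ z in a..b, h z with hS
  have hIoc : IntegrableOn h (Set.Ioc a b) := by
    rw [intervalIntegrable_iff, Set.uIoc_of_le hab] at hint; exact hint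
  set μ := volume.restrict (Set.Ioc a b) with hμ
  have hprod : Integrable (fun p : ℝ × ℝ => h p.1 * h p.2) (μ.prod μ) :=
    hIoc.mul_prod hIoc
  set F : ℝ × ℝ → ℝ := fun p => if p.2 ≤ p.1 then h p.1 * h p.2 else 0 with hF
  have hFind : F = Set.indicator {p : ℝ × ℝ | p.2 ≤ p.1} (fun p => h p.1 * h p.2) := by
    ext p; simp [hF, Set.indicator_apply, Set.mem_setOf_eq]
  have hsmeas : MeasurableSet {p : ℝ × ℝ | p.2 ≤ p.1} :=
    measurableSet_le measurable_snd measurable_fst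
  have hFint : Integrable F (μ.prod μ) := by
    rw [hFind]; exact hprod.indicator hsmeas
  have hswap : (∫ u, ∫ z, F (u, z) ∂μ ∂μ) = ∫ z, ∫ u, F (u, z) ∂μ ∂μ :=
    integral_integral_swap hFint
  have intHprim : IntervalIntegrable (fun u => h u * ∫ z in a..u, h z) volume a b :=
    hint.mul_continuousOn (continuousOn_primitive_interval' hint Set.left_mem_uIcc)
  have inner1 : ∀ u ∈ Set.Ioc a b, (∫ z, F (u, z) ∂μ) = h u * ∫ z in a..u, h z := by
    intro u hu
    have hfun : (fun z => F (u, z)) = Set.indicator (Set.Iic u) (fun z => h u * h z) := by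
      ext z; simp [hF, Set.indicator_apply, Set.mem_Iic]
    rw [hfun, hμ, MeasureTheory.integral_indicator measurableSet_Iic,
      Measure.restrict_restrict measurableSet_Iic]
    have hset : Set.Iic u ∩ Set.Ioc a b = Set.Ioc a u := by
      ext z
      simp only [Set.mem_inter_iff, Set.mem_Iic, Set.mem_Ioc]
      exact ⟨fun ⟨h1, h2, _⟩ => ⟨h2, h1⟩, fun ⟨h2, h1⟩ => ⟨h1, h2, h1.trans hu.2⟩⟩
    rw [hset, MeasureTheory.integral_const_mul, ← intervalIntegral.integral_of_le hu.1.le]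
  have inner2 : ∀ z ∈ Set.Ioc a b, (∫ u, F (u, z) ∂μ) = h z * (S - ∫ w in a..z, h w) := by
    intro z hz
    have hfun : (fun u => F (u, z)) = Set.indicator (Set.Ici z) (fun u => h u * h z) := by
      ext u; simp [hF, Set.indicator_apply, Set.mem_Ici]
    rw [hfun, hμ, MeasureTheory.integral_indicator measurableSet_Ici,
      Measure.restrict_restrict measurableSet_Ici]
    have hset : Set.Ici z ∩ Set.Ioc a b = Set.Icc z b := by
      ext u
      simp only [Set.mem_inter_iff, Set.mem_Ici, Set.mem_Ioc, Set.mem_Icc]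
      exact ⟨fun ⟨h1, _, h3⟩ => ⟨h1, h3⟩, fun ⟨h1, h3⟩ => ⟨h1, hz.1.trans_le h1, h3⟩⟩
    rw [hset, MeasureTheory.integral_Icc_eq_integral_Ioc,
      MeasureTheory.integral_mul_const, ← intervalIntegral.integral_of_le hz.2]
    have hadj : (∫ w in a..z, h w) + ∫ w in z..b, h w = S := by
      rw [hS]
      exact integral_add_adjacent_intervals
        (hint.mono_set (Set.uIcc_subset_uIcc Set.left_mem_uIcc
          (Set.mem_uIcc.2 (Or.inl ⟨hz.1.le, hz.2⟩))))
        (hint.mono_set (Set.uIcc_subset_uIcc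
          (Set.mem_uIcc.2 (Or.inl ⟨hz.1.le, hz.2⟩)) Set.right_mem_uIcc))
    rw [mul_comm]
    rw [show (∫ w in z..b, h w) = S - ∫ w in a..z, h w by linarith]
  set A := ∫ u in a..b, h u * ∫ z in a..u, h z with hA
  have hL : (∫ u, ∫ z, F (u, z) ∂μ ∂μ) = A := by
    rw [hμ, hA, intervalIntegral.integral_of_le hab]
    exact setIntegral_congr_fun measurableSet_Ioc (fun u hu => inner1 u hu)
  have hR : (∫ z, ∫ u, F (u, z) ∂μ ∂μ) = S * S - A := by
    rw [hμ]
    rw [setIntegral_congr_fun measurableSet_Ioc (fun z hz => inner2 z hz)]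
    have e : ∀ z, h z * (S - ∫ w in a..z, h w) = h z * S - h z * ∫ w in a..z, h w := by
      intro z; ring
    simp_rw [e]
    rw [integral_sub (hIoc.mul_const S) (by
      have := intervalIntegrable_iff.mp intHprim
      rwa [Set.uIoc_of_le hab] at this)]
    rw [hA, intervalIntegral.integral_of_le hab]
    congr 1
    rw [MeasureTheory.integral_mul_const, hS, intervalIntegral.integral_of_le hab]
  have : A = S * S - A := by rw [← hL, ← hR] at *; linarith [hswap, hL, hR]
  rw [pow_two]; linarith

lemma key_half' (h : ℝ → ℝ) (hmeas : Measurable h) {a b : ℝ} (hab : a ≤ b)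
    (hint : IntervalIntegrable h volume a b) :
    (∫ u in a..b, h u * ∫ z in b..u, h z) = -((∫ z in a..b, h z) ^ 2) / 2 := by
  have intHprim : IntervalIntegrable (fun u => h u * ∫ z in a..u, h z) volume a b :=
    hint.mul_continuousOn (continuousOn_primitive_interval' hint Set.left_mem_uIcc)
  have hcongr : Set.EqOn (fun u => h u * ∫ z in b..u, h z)
      (fun u => h u * (∫ z in a..u, h z) - h u * ∫ z in a..b, h z) (Set.uIcc a b) := by
    intro u hu
    have hsubint : IntervalIntegrable h volume a u :=
      hint.mono_set (Set.uIcc_subset_uIcc Set.left_mem_uIcc hu)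
    have := intervalIntegral.integral_interval_sub_left hsubint hint
    simp only
    rw [← this]; ring
  rw [intervalIntegral.integral_congr hcongr,
    intervalIntegral.integral_sub intHprim (hint.mul_const _),
    key_half h hmeas hab hint, intervalIntegral.integral_mul_const]
  ring

/-- For an integrable `h : [0,1] → [0,∞)` with `∫_0^1 h = 1`, the circular
interchange-of-integration identity
`∫*_{u=x}^{y} h(u)·(∫*_{z=x}^{u} h(z) dz + ∫*_{z=y}^{u} h(z) dz) du = ∫*_{u=x}^{y} h(u) du`
holds for all `x, y ∈ [0,1]`. -/
theorem circular_double_integral_identity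
    (h : ℝ → ℝ)
    (hmeas : Measurable h)
    (hnn : ∀ u ∈ Set.Icc (0 : ℝ) 1, 0 ≤ h u)
    (hint : IntervalIntegrable h volume 0 1)
    (h1 : (∫ u in (0 : ℝ)..1, h u) = 1) :
    ∀ x ∈ Set.Icc (0 : ℝ) 1, ∀ y ∈ Set.Icc (0 : ℝ) 1,
      cint x y (fun u => h u * (cint x u h + cint y u h)) = cint x y h := by
  intro x hx y hy
  have h01 : Set.uIcc (0:ℝ) 1 = Set.Icc 0 1 := Set.uIcc_of_le zero_le_one
  have hsub : ∀ a b, a ∈ Set.Icc (0:ℝ) 1 → b ∈ Set.Icc (0:ℝ) 1 →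
      IntervalIntegrable h volume a b := fun a b ha hb =>
    hint.mono_set (by rw [h01]; exact Set.uIcc_subset_Icc ha hb)
  have h0 : (0:ℝ) ∈ Set.Icc (0:ℝ) 1 := Set.left_mem_Icc.2 zero_le_one
  have hone : (1:ℝ) ∈ Set.Icc (0:ℝ) 1 := Set.right_mem_Icc.2 zero_le_one
  have hadj : ∀ a b c, a ∈ Set.Icc (0:ℝ) 1 → b ∈ Set.Icc (0:ℝ) 1 → c ∈ Set.Icc (0:ℝ) 1 →
      (∫ z in a..b, h z) + (∫ z in b..c, h z) = ∫ z in a..c, h z :=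
    fun a b c ha hb hc =>
      intervalIntegral.integral_add_adjacent_intervals (hsub a b ha hb) (hsub b c hb hc)
  have hny : ∀ᵐ (u : ℝ), u ≠ y :=
    ae_iff.mpr (by simpa using measure_singleton (μ := (volume : Measure ℝ)) y)
  by_cases hxy : x ≤ y
  · -- case x ≤ y
    set S := ∫ u in x..y, h u with hS
    have hRHS : cint x y h = S := if_pos hxy
    have hL : cint x y (fun u => h u * (cint x u h + cint y u h))
        = ∫ u in x..y, h u * (cint x u h + cint y u h) := if_pos hxy
    rw [hRHS, hL]
    have hcongr : (∫ u in x..y, h u * (cint x u h + cint y u h))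
        = ∫ u in x..y, (h u * (∫ z in x..u, h z) + (h u * (∫ z in y..u, h z) + h u)) := by
      apply intervalIntegral.integral_congr_ae
      filter_upwards [hny] with u hne hu
      rw [Set.uIoc_of_le hxy] at hu
      have hxu : x ≤ u := hu.1.le
      have huy : u < y := lt_of_le_of_ne hu.2 hne
      have hu01 : u ∈ Set.Icc (0:ℝ) 1 := ⟨hx.1.trans hxu, hu.2.trans hy.2⟩
      have c1 : cint x u h = ∫ z in x..u, h z := if_pos hxu
      have c2 : cint y u h = (∫ z in y..(1:ℝ), h z) + ∫ z in (0:ℝ)..u, h z :=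
        if_neg (not_le.2 huy)
      have e1 : (∫ z in (0:ℝ)..u, h z) + (∫ z in u..(1:ℝ), h z) = 1 := by
        rw [hadj 0 u 1 h0 hu01 hone]; exact h1
      have e2 : (∫ z in y..u, h z) + (∫ z in u..(1:ℝ), h z) = ∫ z in y..(1:ℝ), h z :=
        hadj y u 1 hy hu01 hone
      have e3 : (∫ z in y..(1:ℝ), h z) + ∫ z in (0:ℝ)..u, h z
          = (∫ z in y..u, h z) + 1 := by linarith
      rw [c1, c2, e3]; ring
    have i1 : IntervalIntegrable (fun u => h u * ∫ z in x..u, h z) volume x y :=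
      hmulprim hint hx hy hx
    have i2 : IntervalIntegrable (fun u => h u * ∫ z in y..u, h z) volume x y :=
      hmulprim hint hx hy hy
    have i3 : IntervalIntegrable h volume x y := hsub x y hx hy
    rw [hcongr, intervalIntegral.integral_add i1 (i2.add i3),
      intervalIntegral.integral_add i2 i3,
      key_half h hmeas hxy i3, key_half' h hmeas hxy i3, ← hS]
    ring
  · -- case x > y
    have hyx : y < x := not_le.1 hxy
    have hx1 : x ≤ 1 := hx.2
    have h0y : (0:ℝ) ≤ y := hy.1
    set S1 := ∫ u in x..(1:ℝ), h u with hS1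
    set S0 := ∫ u in (0:ℝ)..y, h u with hS0
    set Q := ∫ u in y..x, h u with hQ
    set Sy1 := ∫ u in y..(1:ℝ), h u with hSy1
    have hRHS : cint x y h = S1 + S0 := if_neg hxy
    have hL : cint x y (fun u => h u * (cint x u h + cint y u h))
        = (∫ u in x..(1:ℝ), h u * (cint x u h + cint y u h))
          + ∫ u in (0:ℝ)..y, h u * (cint x u h + cint y u h) := if_neg hxy
    rw [hRHS, hL]
    -- part A
    have hcongrA : (∫ u in x..(1:ℝ), h u * (cint x u h + cint y u h))
        = ∫ u in x..(1:ℝ), (h u * (∫ z in x..u, h z) + (h u * (∫ z in x..u, h z) + h u * Q)) := by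
      apply intervalIntegral.integral_congr
      intro u hu
      rw [Set.uIcc_of_le hx1] at hu
      have hu01 : u ∈ Set.Icc (0:ℝ) 1 := ⟨hx.1.trans hu.1, hu.2⟩
      have c1 : cint x u h = ∫ z in x..u, h z := if_pos hu.1
      have c2 : cint y u h = ∫ z in y..u, h z := if_pos (hyx.le.trans hu.1)
      have e : Q + (∫ z in x..u, h z) = ∫ z in y..u, h z := hadj y x u hy hx hu01
      simp only
      rw [c1, c2, ← e]; ring
    have iA1 : IntervalIntegrable (fun u => h u * ∫ z in x..u, h z) volume x 1 :=
      hmulprim hint hx hone hx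
    have iAQ : IntervalIntegrable (fun u => h u * Q) volume x 1 := (hsub x 1 hx hone).mul_const Q
    have hA : (∫ u in x..(1:ℝ), h u * (cint x u h + cint y u h))
        = S1 ^ 2 / 2 + (S1 ^ 2 / 2 + S1 * Q) := by
      rw [hcongrA, intervalIntegral.integral_add iA1 (iA1.add iAQ),
        intervalIntegral.integral_add iA1 iAQ,
        key_half h hmeas hx1 (hsub x 1 hx hone), intervalIntegral.integral_mul_const, ← hS1]
    -- part B
    have hcongrB : (∫ u in (0:ℝ)..y, h u * (cint x u h + cint y u h))
        = ∫ u in (0:ℝ)..y, (h u * (S1 + Sy1) + (h u * (∫ z in (0:ℝ)..u, h z)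
            + h u * (∫ z in (0:ℝ)..u, h z))) := by
      apply intervalIntegral.integral_congr_ae
      filter_upwards [hny] with u hne hu
      rw [Set.uIoc_of_le h0y] at hu
      have huy : u < y := lt_of_le_of_ne hu.2 hne
      have c1 : cint x u h = S1 + ∫ z in (0:ℝ)..u, h z := if_neg (not_le.2 (huy.trans hyx))
      have c2 : cint y u h = Sy1 + ∫ z in (0:ℝ)..u, h z := if_neg (not_le.2 huy)
      rw [c1, c2]; ring
    have iB1 : IntervalIntegrable (fun u => h u * (S1 + Sy1)) volume 0 y :=
      (hsub 0 y h0 hy).mul_const _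
    have iB2 : IntervalIntegrable (fun u => h u * ∫ z in (0:ℝ)..u, h z) volume 0 y :=
      hmulprim hint h0 hy h0
    have hB : (∫ u in (0:ℝ)..y, h u * (cint x u h + cint y u h))
        = S0 * (S1 + Sy1) + (S0 ^ 2 / 2 + S0 ^ 2 / 2) := by
      rw [hcongrB, intervalIntegral.integral_add iB1 (iB2.add iB2),
        intervalIntegral.integral_add iB2 iB2,
        key_half h hmeas h0y (hsub 0 y h0 hy), intervalIntegral.integral_mul_const, ← hS0]
    rw [hA, hB]
    have hsum : S0 + Sy1 = 1 := by rw [hS0, hSy1, hadj 0 y 1 h0 hy hone]; exact h1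
    have hsy : Q + S1 = Sy1 := by rw [hQ, hS1, hSy1, hadj y x 1 hy hx hone]
    linear_combination (S0 + S1) * hsum + S1 * hsy
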